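/- For any stable matching instance I on n workers and n firms, the fractional stable matching polytope P_I equals the convex hull of the indicator vectors of the matchings stable under I; in particular, every extreme point of P_I is the indicator vector of a stable matching of I. -/

import Mathlib

/-- A stable matching instance on `n` workers and `n` firms: each worker `w` has a strict
total preference order over firms encoded by an injective rank function `wRank w`
(lower rank = more preferred), and each firm `f` has one over workers (`fRank f`). -/
structure SMInstance (n : ℕ) where
  wRank : Fin n → Fin n → Fin n
  fRank : Fin n → Fin n → Fin n
  wRank_inj : ∀ w, Function.Injective (wRank w)
  fRank_inj : ∀ f, Function.Injective (fRank f)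

/-- `(w, f)` is a blocking pair of the matching `M` under instance `I`:
`M w ≠ f`, `w` strictly prefers `f` to `M w`, and `f` strictly prefers `w`
to its `M`-partner (the worker `w'` with `M w' = f`). -/
def Blocking {n : ℕ} (I : SMInstance n) (M : Fin n → Fin n) (w f : Fin n) : Prop :=
  M w ≠ f ∧ I.wRank w f < I.wRank w (M w) ∧
    ∃ w', M w' = f ∧ I.fRank f w < I.fRank f w'

/-- A matching (bijection) is stable under `I` if it has no blocking pair. -/
def IsStable {n : ℕ} (I : SMInstance n) (M : Fin n → Fin n) : Prop :=
  Function.Bijective M ∧ ∀ w f, ¬ Blocking I M w f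

/-- The join `M₁ ∨_I M₂`: each worker gets its less preferred partner. -/
def joinMap {n : ℕ} (I : SMInstance n) (M₁ M₂ : Fin n → Fin n) : Fin n → Fin n :=
  fun w => if I.wRank w (M₁ w) < I.wRank w (M₂ w) then M₂ w else M₁ w

/-- The meet `M₁ ∧_I M₂`: each worker gets its more preferred partner. -/
def meetMap {n : ℕ} (I : SMInstance n) (M₁ M₂ : Fin n → Fin n) : Fin n → Fin n :=
  fun w => if I.wRank w (M₁ w) < I.wRank w (M₂ w) then M₁ w else M₂ w

open Finset in
/-- Membership in the fractional stable matching polytope P_I. -/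
def InPolytope {n : ℕ} (I : SMInstance n) (x : Fin n → Fin n → ℝ) : Prop :=
  (∀ w f, 0 ≤ x w f) ∧
  (∀ w, ∑ f, x w f = 1) ∧
  (∀ f, ∑ w, x w f = 1) ∧
  (∀ w f, ∑ f' ∈ univ.filter (fun f' => I.wRank w f < I.wRank w f'), x w f' ≤
          ∑ w' ∈ univ.filter (fun w' => I.fRank f w' < I.fRank f w), x w' f)

/-- The 0/1 indicator vector of a matching M. -/
def indicVec {n : ℕ} (M : Fin n → Fin n) : Fin n → Fin n → ℝ :=
  fun w f => if M w = f then 1 else 0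
open Finset

lemma indic_row_sum {n : ℕ} (M : Fin n → Fin n) (w : Fin n) (s : Finset (Fin n)) :
    ∑ f ∈ s, indicVec M w f = if M w ∈ s then 1 else 0 := by
  simpa [indicVec] using Finset.sum_ite_eq s (M w) (fun _ => (1:ℝ))

lemma indic_col_sum {n : ℕ} (M : Fin n → Fin n) (hM : Function.Bijective M) (f : Fin n)
    (s : Finset (Fin n)) :
    ∑ w ∈ s, indicVec M w f
      = if (Equiv.ofBijective M hM).symm f ∈ s then 1 else 0 := by
  rw [Finset.sum_congr rfl (fun w _ => ?_), Finset.sum_ite_eq' s _ (fun _ => (1:ℝ))]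
  show indicVec M w f = if w = (Equiv.ofBijective M hM).symm f then 1 else 0
  unfold indicVec
  congr 1
  have key : M ((Equiv.ofBijective M hM).symm f) = f :=
    (Equiv.ofBijective M hM).apply_symm_apply f
  refine propext ⟨fun h => ?_, fun h => ?_⟩
  · apply hM.injective; rw [h, key]
  · rw [h, key]

lemma indic_mem_polytope {n : ℕ} (I : SMInstance n) {M : Fin n → Fin n}
    (hM : IsStable I M) : InPolytope I (indicVec M) := by
  obtain ⟨hbij, hstab⟩ := hM
  refine ⟨fun w f => by unfold indicVec; positivity, fun w => ?_, fun f => ?_, fun w f => ?_⟩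
  · rw [indic_row_sum]; simp
  · rw [indic_col_sum M hbij]; simp
  · rw [indic_row_sum, indic_col_sum M hbij]
    by_cases h : M w ∈ univ.filter (fun f' => I.wRank w f < I.wRank w f')
    · rw [if_pos h]
      simp only [mem_filter, mem_univ, true_and] at h
      set w' := (Equiv.ofBijective M hbij).symm f with hw'
      have hMw' : M w' = f := (Equiv.ofBijective M hbij).apply_symm_apply f
      have hne : M w ≠ f := fun he => by rw [he] at h; exact lt_irrefl _ h
      have hnb := hstab w f
      unfold Blocking at hnb
      push_neg at hnb
      have hle := hnb hne h w' hMw'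
      have hnew : w' ≠ w := fun he => hne (by rw [← he, hMw'])
      have : I.fRank f w' < I.fRank f w :=
        lt_of_le_of_ne hle (fun he => hnew (I.fRank_inj f he))
      rw [if_pos (by simpa using this)]
    · rw [if_neg h]
      split <;> norm_num

lemma polytope_convex {n : ℕ} (I : SMInstance n) :
    Convex ℝ {x : Fin n → Fin n → ℝ | InPolytope I x} := by
  intro x hx y hy a b ha hb hab
  obtain ⟨hx0, hxr, hxc, hxs⟩ := hx
  obtain ⟨hy0, hyr, hyc, hys⟩ := hy
  have hav : ∀ w f, (a • x + b • y) w f = a * x w f + b * y w f := fun w f => rfl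
  refine ⟨fun w f => by
    rw [hav]; exact add_nonneg (mul_nonneg ha (hx0 w f)) (mul_nonneg hb (hy0 w f)),
    fun w => ?_, fun f => ?_, fun w f => ?_⟩
  · simp only [hav, Finset.sum_add_distrib, ← Finset.mul_sum, hxr, hyr]; linarith
  · simp only [hav, Finset.sum_add_distrib, ← Finset.mul_sum, hxc, hyc]; linarith
  · simp only [hav, Finset.sum_add_distrib, ← Finset.mul_sum]
    have := hxs w f; have := hys w f
    nlinarith [hxs w f, hys w f]
lemma frac_mem_hull {n : ℕ} (hn : 1 ≤ n) (I : SMInstance n) :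
    ∀ N : ℕ, ∀ x : Fin n → Fin n → ℝ,
      (univ.filter (fun p : Fin n × Fin n => x p.1 p.2 ≠ 0)).card ≤ N →
      InPolytope I x →
      x ∈ convexHull ℝ {x : Fin n → Fin n → ℝ | ∃ M, IsStable I M ∧ x = indicVec M} := by
  intro N
  induction N with
  | zero =>
    intro x hcard hx
    exfalso
    have h0 : ∀ w f, x w f = 0 := by
      intro w f
      by_contra h
      have hm : (w, f) ∈ univ.filter (fun p : Fin n × Fin n => x p.1 p.2 ≠ 0) := by
        simp [h]
      have := Finset.card_pos.mpr ⟨_, hm⟩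
      omega
    have h1 := hx.2.1 ⟨0, hn⟩
    rw [Finset.sum_eq_zero (fun f _ => h0 ⟨0, hn⟩ f)] at h1
    norm_num at h1
  | succ N ih =>
    intro x hcard hx
    obtain ⟨hx0, hxr, hxc, hxs⟩ := hx
    -- choose each worker's most preferred firm in its support
    have hrow : ∀ w, ∃ f, x w f ≠ 0 ∧ ∀ f', x w f' ≠ 0 → I.wRank w f ≤ I.wRank w f' := by
      intro w
      have hne : (univ.filter (fun f => x w f ≠ 0)).Nonempty := by
        by_contra h
        rw [Finset.not_nonempty_iff_eq_empty] at h
        have hall : ∀ f ∈ (univ : Finset (Fin n)), x w f = 0 := by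
          intro f _
          by_contra hf
          have : f ∈ univ.filter (fun f => x w f ≠ 0) := by simp [hf]
          simp [h] at this
        have h1 := hxr w
        rw [Finset.sum_eq_zero hall] at h1
        norm_num at h1
      obtain ⟨f, hf, hmin⟩ := Finset.exists_min_image _ (fun f => I.wRank w f) hne
      exact ⟨f, by simpa using hf, fun f' hf' => hmin f' (by simp [hf'])⟩
    choose b hb hbmin using hrow
    -- Step B : everyone else in column (b w)'s support is strictly preferred to w
    have hcolB : ∀ w w', w' ≠ w → x w' (b w) ≠ 0 →
        I.fRank (b w) w' < I.fRank (b w) w := by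
      intro w w' hne hxne
      have hsub : univ.filter (fun f' => I.wRank w (b w) < I.wRank w f') ⊆
          univ.erase (b w) := by
        intro f' hf'
        simp only [mem_filter, mem_univ, true_and] at hf'
        refine Finset.mem_erase.mpr ⟨?_, mem_univ _⟩
        intro heq; rw [heq] at hf'; exact lt_irrefl _ hf'
      have hLHS : ∑ f' ∈ univ.filter (fun f' => I.wRank w (b w) < I.wRank w f'), x w f'
          = 1 - x w (b w) := by
        have he : ∑ f' ∈ univ.filter (fun f' => I.wRank w (b w) < I.wRank w f'), x w f'
            = ∑ f' ∈ univ.erase (b w), x w f' := by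
          apply Finset.sum_subset hsub
          intro f' hf' hnot
          simp only [mem_filter, mem_univ, true_and] at hnot
          rw [Finset.mem_erase] at hf'
          by_contra hxne'
          have hle := hbmin w f' hxne'
          exact hnot (lt_of_le_of_ne hle (fun heq => hf'.1 (I.wRank_inj w heq.symm)))
        rw [he]
        have h1 := hxr w
        rw [← Finset.add_sum_erase univ (x w) (mem_univ (b w))] at h1
        linarith
      have hge := hxs w (b w)
      rw [hLHS] at hge
      have hsubQ : univ.filter (fun w'' => I.fRank (b w) w'' < I.fRank (b w) w) ⊆
          univ.erase w := by
        intro w'' hw''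
        simp only [mem_filter, mem_univ, true_and] at hw''
        refine Finset.mem_erase.mpr ⟨?_, mem_univ _⟩
        intro heq; rw [heq] at hw''; exact lt_irrefl _ hw''
      have herase : ∑ w'' ∈ univ.erase w, x w'' (b w) = 1 - x w (b w) := by
        have h1 := hxc (b w)
        rw [← Finset.add_sum_erase univ (fun w'' => x w'' (b w)) (mem_univ w)] at h1
        linarith
      have hle : ∑ w'' ∈ univ.filter (fun w'' => I.fRank (b w) w'' < I.fRank (b w) w),
          x w'' (b w) ≤ ∑ w'' ∈ univ.erase w, x w'' (b w) :=
        Finset.sum_le_sum_of_subset_of_nonneg hsubQ (fun w'' _ _ => hx0 w'' (b w))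
      have hsdiff : ∑ w'' ∈ (univ.erase w) \
          (univ.filter (fun w'' => I.fRank (b w) w'' < I.fRank (b w) w)), x w'' (b w) = 0 := by
        have hs := Finset.sum_sdiff (f := fun w'' => x w'' (b w)) hsubQ
        linarith
      by_contra hnotlt
      have hmem : w' ∈ (univ.erase w) \
          (univ.filter (fun w'' => I.fRank (b w) w'' < I.fRank (b w) w)) := by
        simp only [Finset.mem_sdiff, Finset.mem_erase, mem_filter, mem_univ, true_and]
        exact ⟨⟨hne, trivial⟩, hnotlt⟩
      have := (Finset.sum_eq_zero_iff_of_nonneg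
        (fun w'' _ => hx0 w'' (b w))).mp hsdiff w' hmem
      exact hxne this
    -- Step C : b is a bijection
    have hbinj : Function.Injective b := by
      intro w1 w2 h12
      by_contra hne
      have h1 := hcolB w1 w2 (fun h => hne h.symm) (by rw [h12]; exact hb w2)
      have h2 := hcolB w2 w1 hne (by rw [← h12]; exact hb w1)
      rw [h12] at h1
      exact lt_asymm h1 h2
    have hbbij : Function.Bijective b := Finite.injective_iff_bijective.mp hbinj
    -- Step D : b is stable
    have hstab : IsStable I b := by
      refine ⟨hbbij, fun w f hbl => ?_⟩
      obtain ⟨hne, hpref, w', hbw', hfr⟩ := hbl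
      have hLHS1 : ∑ f' ∈ univ.filter (fun f' => I.wRank w f < I.wRank w f'), x w f'
          = 1 := by
        rw [← hxr w]
        apply Finset.sum_subset (filter_subset _ _)
        intro f' _ hnot
        simp only [mem_filter, mem_univ, true_and] at hnot
        by_contra hx'
        exact hnot (lt_of_lt_of_le hpref (hbmin w f' hx'))
      have hge := hxs w f
      rw [hLHS1] at hge
      have hw'f : x w' f ≠ 0 := by rw [← hbw']; exact hb w'
      have hsubQ : univ.filter (fun w'' => I.fRank f w'' < I.fRank f w) ⊆
          univ.erase w' := by
        intro w'' hw''
        simp only [mem_filter, mem_univ, true_and] at hw''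
        refine Finset.mem_erase.mpr ⟨?_, mem_univ _⟩
        intro heq; rw [heq] at hw''; exact lt_asymm hfr hw''
      have hle : ∑ w'' ∈ univ.filter (fun w'' => I.fRank f w'' < I.fRank f w), x w'' f ≤
          ∑ w'' ∈ univ.erase w', x w'' f :=
        Finset.sum_le_sum_of_subset_of_nonneg hsubQ (fun w'' _ _ => hx0 w'' f)
      have herase : ∑ w'' ∈ univ.erase w', x w'' f = 1 - x w' f := by
        have h1 := hxc f
        rw [← Finset.add_sum_erase univ (fun w'' => x w'' f) (mem_univ w')] at h1
        linarith
      have hpos : 0 < x w' f := lt_of_le_of_ne (hx0 w' f) (Ne.symm hw'f)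
      linarith
    -- Step E : minimum
    obtain ⟨w₀, -, hw₀min⟩ := Finset.exists_min_image univ (fun w => x w (b w))
      ⟨⟨0, hn⟩, mem_univ _⟩
    have hεmin : ∀ w, x w₀ (b w₀) ≤ x w (b w) := fun w => hw₀min w (mem_univ w)
    set ε := x w₀ (b w₀) with hεdef
    have hε0 : 0 < ε := lt_of_le_of_ne (hx0 _ _) (Ne.symm (hb w₀))
    have hεle1 : ∀ w, x w (b w) ≤ 1 := by
      intro w
      have := Finset.single_le_sum (f := x w) (fun f _ => hx0 w f) (mem_univ (b w))
      rw [hxr w] at this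
      exact this
    by_cases hcase : ε < 1
    · -- inductive case
      have h1ε : 0 < 1 - ε := by linarith
      set y : Fin n → Fin n → ℝ :=
        fun w f => (x w f - ε * indicVec b w f) / (1 - ε) with hy
      have hynn : ∀ w f, 0 ≤ y w f := by
        intro w f
        apply div_nonneg _ h1ε.le
        by_cases h : b w = f
        · have : indicVec b w f = 1 := by simp [indicVec, h]
          rw [this, mul_one]
          have := hεmin w
          rw [h] at this
          linarith
        · have : indicVec b w f = 0 := by simp [indicVec, h]
          rw [this, mul_zero, sub_zero]
          exact hx0 w f
      have hyrow : ∀ w, ∑ f, y w f = 1 := by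
        intro w
        simp only [hy]
        rw [← Finset.sum_div, Finset.sum_sub_distrib, ← Finset.mul_sum,
          indic_row_sum, hxr w]
        simp
        field_simp
        exact h1ε.ne'
      have hycol : ∀ f, ∑ w, y w f = 1 := by
        intro f
        simp only [hy]
        rw [← Finset.sum_div, Finset.sum_sub_distrib, ← Finset.mul_sum,
          indic_col_sum b hbbij, hxc f]
        simp
        field_simp
        exact h1ε.ne'
      have hystab : ∀ w f,
          ∑ f' ∈ univ.filter (fun f' => I.wRank w f < I.wRank w f'), y w f' ≤
          ∑ w' ∈ univ.filter (fun w' => I.fRank f w' < I.fRank f w), y w' f := by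
        intro w f
        simp only [hy]
        rw [← Finset.sum_div, ← Finset.sum_div, Finset.sum_sub_distrib,
          Finset.sum_sub_distrib, ← Finset.mul_sum, ← Finset.mul_sum,
          indic_row_sum, indic_col_sum b hbbij]
        refine div_le_div_of_nonneg_right ?_ h1ε.le
        by_cases ha : b w ∈ univ.filter (fun f' => I.wRank w f < I.wRank w f')
        · rw [if_pos ha]
          have hAB := hxs w f
          split_ifs with hc
          · linarith
          · linarith
        · rw [if_neg ha]
          simp only [mem_filter, mem_univ, true_and] at ha
          split_ifs with hc
          · -- the interesting case
            set w' := (Equiv.ofBijective b hbbij).symm f with hw'def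
            have hbw' : b w' = f := (Equiv.ofBijective b hbbij).apply_symm_apply f
            simp only [mem_filter, mem_univ, true_and] at hc
            have hw'w : w' ≠ w := by
              intro h; rw [h] at hc; exact lt_irrefl _ hc
            have hbwf : b w ≠ f := fun h => hw'w (hbinj (hbw'.trans h.symm))
            have hB1 : ∑ w'' ∈ univ.filter (fun w'' => I.fRank f w'' < I.fRank f w),
                x w'' f = 1 := by
              rw [← hxc f]
              apply Finset.sum_subset (filter_subset _ _)
              intro w'' _ hnot
              simp only [mem_filter, mem_univ, true_and] at hnot
              by_contra hxne
              rcases eq_or_ne w'' w' with he | hne2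
              · rw [he] at hnot; exact hnot hc
              · have h3 := hcolB w' w'' hne2 (by rw [hbw']; exact hxne)
                rw [hbw'] at h3
                exact hnot (h3.trans hc)
            have hsubA : univ.filter (fun f' => I.wRank w f < I.wRank w f') ⊆
                univ.erase (b w) := by
              intro f' hf'
              simp only [mem_filter, mem_univ, true_and] at hf'
              refine Finset.mem_erase.mpr ⟨?_, mem_univ _⟩
              intro heq; rw [heq] at hf'; exact ha hf'
            have hA : ∑ f' ∈ univ.filter (fun f' => I.wRank w f < I.wRank w f'),
                x w f' ≤ 1 - x w (b w) := by
              have h4 : ∑ f' ∈ univ.erase (b w), x w f' = 1 - x w (b w) := by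
                have h1 := hxr w
                rw [← Finset.add_sum_erase univ (x w) (mem_univ (b w))] at h1
                linarith
              rw [← h4]
              exact Finset.sum_le_sum_of_subset_of_nonneg hsubA (fun f' _ _ => hx0 w f')
            have h5 := hεmin w
            rw [hB1]
            linarith
          · have := hxs w f; linarith
      have hyP : InPolytope I y := ⟨hynn, hyrow, hycol, hystab⟩
      have hsubss : (univ.filter (fun p : Fin n × Fin n => y p.1 p.2 ≠ 0)) ⊆
          (univ.filter (fun p : Fin n × Fin n => x p.1 p.2 ≠ 0)) := by
        intro p hp
        simp only [mem_filter, mem_univ, true_and] at hp ⊢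
        by_contra hxp
        apply hp
        have hbp : b p.1 ≠ p.2 := by
          intro h; apply hb p.1; rw [h]; exact hxp
        simp only [hy]
        simp [indicVec, hbp, hxp]
      have hssub : (univ.filter (fun p : Fin n × Fin n => y p.1 p.2 ≠ 0)) ⊂
          (univ.filter (fun p : Fin n × Fin n => x p.1 p.2 ≠ 0)) := by
        refine (Finset.ssubset_iff_of_subset hsubss).mpr ⟨(w₀, b w₀), ?_, ?_⟩
        · simp only [mem_filter, mem_univ, true_and]
          exact hb w₀
        · simp only [mem_filter, mem_univ, true_and, not_not]
          show (x w₀ (b w₀) - ε * indicVec b w₀ (b w₀)) / (1 - ε) = 0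
          have : indicVec b w₀ (b w₀) = 1 := by simp [indicVec]
          rw [this, mul_one, ← hεdef, sub_self, zero_div]
      have hycard : (univ.filter (fun p : Fin n × Fin n => y p.1 p.2 ≠ 0)).card ≤ N := by
        have := Finset.card_lt_card hssub
        omega
      have hyhull := ih y hycard hyP
      have hvhull := subset_convexHull ℝ
        {x : Fin n → Fin n → ℝ | ∃ M, IsStable I M ∧ x = indicVec M} ⟨b, hstab, rfl⟩
      have hfinal := (convex_convexHull ℝ
        {x : Fin n → Fin n → ℝ | ∃ M, IsStable I M ∧ x = indicVec M})
        hvhull hyhull hε0.le h1ε.le (by ring)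
      have hxeq : x = ε • indicVec b + (1 - ε) • y := by
        funext w f
        show x w f = ε * indicVec b w f + (1 - ε) * ((x w f - ε * indicVec b w f) / (1 - ε))
        rw [mul_comm (1 - ε), div_mul_cancel₀ _ (ne_of_gt h1ε)]
        ring
      rw [hxeq]
      exact hfinal
    · -- x is already the indicator vector of b
      have hε1 : ε = 1 := le_antisymm (hεle1 w₀) (not_lt.mp hcase)
      have hall1 : ∀ w, x w (b w) = 1 := fun w =>
        le_antisymm (hεle1 w) (by rw [← hε1]; exact hεmin w)
      have hxind : x = indicVec b := by
        funext w f
        show x w f = if b w = f then 1 else 0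
        by_cases h : b w = f
        · rw [if_pos h, ← h]; exact hall1 w
        · rw [if_neg h]
          have hsum : ∑ f' ∈ univ.erase (b w), x w f' = 0 := by
            have h1 := hxr w
            rw [← Finset.add_sum_erase univ (x w) (mem_univ (b w)), hall1 w] at h1
            linarith
          exact (Finset.sum_eq_zero_iff_of_nonneg (fun f' _ => hx0 w f')).mp hsum f
            (Finset.mem_erase.mpr ⟨fun he => h he.symm, mem_univ f⟩)
      exact subset_convexHull ℝ _ ⟨b, hstab, hxind⟩

/-- the fractional stable matching polytope of an instance I equals the
convex hull of the indicator vectors of the I-stable matchings; in particular every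
extreme point of P_I is the indicator vector of a stable matching. -/
theorem stmt17 {n : ℕ} (hn : 1 ≤ n) (I : SMInstance n) :
    ({x : Fin n → Fin n → ℝ | InPolytope I x} =
      convexHull ℝ {x : Fin n → Fin n → ℝ | ∃ M, IsStable I M ∧ x = indicVec M}) ∧
    (∀ x ∈ Set.extremePoints ℝ {x : Fin n → Fin n → ℝ | InPolytope I x},
      ∃ M, IsStable I M ∧ x = indicVec M) := by
  have hS : {x : Fin n → Fin n → ℝ | ∃ M, IsStable I M ∧ x = indicVec M} ⊆
      {x : Fin n → Fin n → ℝ | InPolytope I x} := by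
    rintro x ⟨M, hM, rfl⟩; exact indic_mem_polytope I hM
  have heq : ({x : Fin n → Fin n → ℝ | InPolytope I x} =
      convexHull ℝ {x : Fin n → Fin n → ℝ | ∃ M, IsStable I M ∧ x = indicVec M}) := by
    apply Set.Subset.antisymm
    · intro x hx
      exact frac_mem_hull hn I _ x le_rfl hx
    · exact convexHull_min hS (polytope_convex I)
  refine ⟨heq, fun x hx => ?_⟩
  rw [heq] at hx
  exact extremePoints_convexHull_subset (A := {x : Fin n → Fin n → ℝ | ∃ M, IsStable I M ∧ x = indicVec M}) hx
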